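/- Let K/F be a quadratic extension of fields of characteristic not 2 with conjugation a ↦ ā, and fix δ ∈ K^× with δ̄ = -δ. Let V be a finite-dimensional K-vector space and let ⟨ , ⟩ : V × V → F be a nondegenerate F-bilinear alternating form satisfying ⟨a x, y⟩ = ⟨x, ā y⟩ for all a ∈ K. Then there is a unique K-hermitian form ( , ) on V with ⟨x, y⟩ = Tr_{K/F}(δ^{-1}(x, y)) for all x, y. -/

import Mathlib

/-- Let `K/F` be a quadratic extension of fields of characteristic ≠ 2 with
conjugation `σ`, and `δ ∈ K^×` with `σ δ = -δ`.  Let `V` be a finite-dimensional `K`-vector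
space and `B` a nondegenerate `F`-bilinear alternating form on `V` with
`B (a • x) y = B x (σ a • y)`.  Then there is a unique `K`-hermitian form `h` on `V` with
`B x y = Tr_{K/F}(δ⁻¹ * h x y)` for all `x, y`. -/
theorem stmt_3 (F K : Type*) [Field F] [Field K] [Algebra F K]
    (h2 : (2 : F) ≠ 0) (hdim : Module.finrank F K = 2)
    (σ : K ≃ₐ[F] K) (hσne : ∃ x, σ x ≠ x) (hσinv : ∀ x, σ (σ x) = x)
    (δ : K) (hδ0 : δ ≠ 0) (hδ : σ δ = -δ)
    (V : Type*) [AddCommGroup V] [Module K V] [FiniteDimensional K V]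
    (B : V → V → F)
    (hBaddl : ∀ x y z : V, B (x + y) z = B x z + B y z)
    (hBaddr : ∀ x y z : V, B x (y + z) = B x y + B x z)
    (hBsmull : ∀ (c : F) (x y : V), B ((algebraMap F K c) • x) y = c * B x y)
    (hBsmulr : ∀ (c : F) (x y : V), B x ((algebraMap F K c) • y) = c * B x y)
    (hBalt : ∀ x : V, B x x = 0)
    (hBnd : ∀ x : V, (∀ y : V, B x y = 0) → x = 0)
    (hBcompat : ∀ (a : K) (x y : V), B (a • x) y = B x (σ a • y)) :
    ∃! h : V → V → K,
      (∀ x y z : V, h (x + y) z = h x z + h y z) ∧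
      (∀ x y z : V, h x (y + z) = h x y + h x z) ∧
      (∀ (a : K) (x y : V), h (a • x) y = a * h x y) ∧
      (∀ (a : K) (x y : V), h x (a • y) = σ a * h x y) ∧
      (∀ x y : V, h y x = σ (h x y)) ∧
      (∀ x y : V, B x y = Algebra.trace F K (δ⁻¹ * h x y)) := by
  set e := algebraMap F K with he
  have hinj : Function.Injective e := (algebraMap F K).injective
  have h2K : (2 : K) ≠ 0 := by
    intro h
    apply h2
    apply hinj
    rw [map_ofNat, map_zero, h]
  have hσe : ∀ c : F, σ (e c) = e c := fun c => σ.commutes c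
  have hδF : ∀ c : F, e c ≠ δ := by
    intro c hc
    have h1 : σ δ = δ := by rw [← hc]; exact σ.commutes c
    rw [hδ] at h1
    have : (2 : K) * δ = 0 := by linear_combination -h1
    rcases mul_eq_zero.1 this with h | h
    · exact h2K h
    · exact hδ0 h
  -- linear independence of {1, δ}
  have hli : LinearIndependent F ![(1 : K), δ] := by
    rw [LinearIndependent.pair_iff]
    intro s t hst
    rw [Algebra.smul_def, Algebra.smul_def, mul_one] at hst
    by_cases ht : t = 0
    · subst ht
      simp only [map_zero, zero_mul, add_zero] at hst
      exact ⟨hinj (by rw [hst, map_zero]), rfl⟩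
    · exfalso
      apply hδF (-s / t)
      have het : e t ≠ 0 := fun h => ht (hinj (by rw [h, map_zero]))
      rw [map_div₀, div_eq_iff het, map_neg]
      linear_combination -hst
  have hb : Fintype.card (Fin 2) = Module.finrank F K := by rw [hdim]; rfl
  set b : Module.Basis (Fin 2) F K := basisOfLinearIndependentOfCardEqFinrank hli hb with hbdef
  have hb0 : b 0 = 1 := by
    rw [hbdef, coe_basisOfLinearIndependentOfCardEqFinrank]; rfl
  have hb1 : b 1 = δ := by
    rw [hbdef, coe_basisOfLinearIndependentOfCardEqFinrank]; rfl
  -- decomposition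
  have hdec : ∀ a : K, ∃ s t : F, a = e s + e t * δ := by
    intro a
    refine ⟨b.repr a 0, b.repr a 1, ?_⟩
    have := b.sum_repr a
    rw [Fin.sum_univ_two, hb0, hb1] at this
    rw [Algebra.smul_def, Algebra.smul_def, mul_one] at this
    exact this.symm
  -- δ² ∈ F
  obtain ⟨n, hn⟩ : ∃ n : F, e n = δ * δ := by
    obtain ⟨s, t, hst⟩ := hdec (δ * δ)
    have hσst : δ * δ = e s - e t * δ := by
      have : σ (δ * δ) = δ * δ := by rw [map_mul, hδ]; ring
      calc δ * δ = σ (δ * δ) := this.symm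
        _ = e s - e t * δ := by
          rw [hst]
          simp only [map_add, map_mul, hδ, hσe]
          ring
    have ht : e t * δ = 0 := by
      have h1 : (2 : K) * (e t * δ) = 0 := by linear_combination hσst - hst
      rcases mul_eq_zero.1 h1 with h | h
      · exact absurd h h2K
      · exact h
    rcases mul_eq_zero.1 ht with h | h
    · exact ⟨s, by rw [hst, h, zero_mul, add_zero]⟩
    · exact absurd h hδ0
  have hn0 : n ≠ 0 := by
    intro h
    rw [h, map_zero] at hn
    exact hδ0 (by rcases mul_eq_zero.1 hn.symm with h | h <;> exact h)
  -- trace facts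
  have htr1 : Algebra.trace F K 1 = 2 := by
    have := Algebra.trace_algebraMap (R := F) (S := K) 1
    rw [map_one, hdim] at this
    rw [this]; norm_num
  have htrF : ∀ c : F, Algebra.trace F K (e c) = 2 * c := by
    intro c
    rw [he, Algebra.trace_algebraMap, hdim]
    push_cast
    ring
  have htrδ : Algebra.trace F K δ = 0 := by
    rw [Algebra.trace_eq_matrix_trace b, Matrix.trace_fin_two,
      Algebra.leftMulMatrix_eq_repr_mul, Algebra.leftMulMatrix_eq_repr_mul, hb0, hb1]
    have e1 : δ * 1 = (1 : F) • b 1 := by rw [hb1, one_smul, mul_one]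
    have e2 : δ * δ = n • b 0 := by rw [hb0, Algebra.smul_def, mul_one, hn]
    rw [e1, e2, map_smul, map_smul, b.repr_self, b.repr_self]
    simp
  have htrδinv : Algebra.trace F K δ⁻¹ = 0 := by
    have hinvδ : δ⁻¹ = e n⁻¹ * δ := by
      refine inv_eq_of_mul_eq_one_right ?_
      rw [map_inv₀]
      field_simp [hn]
      rw [hn]; ring
    rw [hinvδ, ← Algebra.smul_def, map_smul, htrδ, smul_zero]
  -- B facts
  have Bzero_r : ∀ x : V, B x 0 = 0 := by
    intro x
    have := hBaddr x 0 0
    rw [add_zero] at this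
    linear_combination -this
  have Bneg_r : ∀ x y : V, B x (-y) = -B x y := by
    intro x y
    have := hBaddr x y (-y)
    rw [add_neg_cancel, Bzero_r] at this
    linear_combination -this
  have Bskew : ∀ x y : V, B y x = -B x y := by
    intro x y
    have h0 := hBalt (x + y)
    rw [hBaddl, hBaddr, hBaddr, hBalt, hBalt] at h0
    linear_combination h0
  have Bds : ∀ x y : V, B (δ • x) y = B (δ • y) x := by
    intro x y
    rw [hBcompat δ x y, hδ, neg_smul, Bneg_r, Bskew]
    ring_nf
  -- the hermitian form
    -- h x y = e (2⁻¹ * B (δ•x) y) + e (2⁻¹ * B x y) * δ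
  set Hf : V → V → K := fun x y => e (2⁻¹ * B (δ • x) y) + e (2⁻¹ * B x y) * δ with hHf
  have Haddl : ∀ x y z : V, Hf (x + y) z = Hf x z + Hf y z := by
    intro x y z
    simp only [hHf, smul_add, hBaddl, mul_add, map_add]
    ring
  have Haddr : ∀ x y z : V, Hf x (y + z) = Hf x y + Hf x z := by
    intro x y z
    simp only [hHf, hBaddr, mul_add, map_add]
    ring
  have HsmulF : ∀ (c : F) (x y : V), Hf (e c • x) y = e c * Hf x y := by
    intro c x y
    have hcomm : δ • (e c • x) = e c • (δ • x) := smul_comm _ _ _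
    simp only [hHf, hcomm, hBsmull, map_mul]
    ring
  have Hsmulδ : ∀ x y : V, Hf (δ • x) y = δ * Hf x y := by
    intro x y
    have hdd : δ • (δ • x) = e n • x := by rw [smul_smul, ← hn]
    simp only [hHf, hdd, hBsmull, map_mul]
    rw [hn]
    ring
  have Hsmull : ∀ (a : K) (x y : V), Hf (a • x) y = a * Hf x y := by
    intro a x y
    obtain ⟨s, t, rfl⟩ := hdec a
    rw [add_smul, Haddl, mul_smul, HsmulF, HsmulF, Hsmulδ]
    ring
  have Hsymm : ∀ x y : V, Hf y x = σ (Hf x y) := by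
    intro x y
    simp only [hHf]
    rw [Bds, Bskew x y]
    simp only [map_add, map_mul, map_neg, hδ, hσe]
    ring
  have Hsmulr : ∀ (a : K) (x y : V), Hf x (a • y) = σ a * Hf x y := by
    intro a x y
    rw [show Hf x (a • y) = σ (Hf (a • y) x) from Hsymm (a • y) x,
      Hsmull, map_mul, ← Hsymm y x]
  have Htrace : ∀ x y : V, B x y = Algebra.trace F K (δ⁻¹ * Hf x y) := by
    intro x y
    have key : δ⁻¹ * Hf x y = (2⁻¹ * B (δ • x) y) • δ⁻¹ + e (2⁻¹ * B x y) := by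
      simp only [hHf]
      rw [Algebra.smul_def]
      linear_combination e (2⁻¹ * B x y) * inv_mul_cancel₀ hδ0
    rw [key, map_add, map_smul, htrδinv, smul_zero, zero_add, htrF]
    field_simp
  refine ⟨Hf, ⟨Haddl, Haddr, Hsmull, Hsmulr, Hsymm, Htrace⟩, ?_⟩
  rintro h' ⟨_, _, h'smull, _, _, h'trace⟩
  funext x y
  by_contra hne
  set d := h' x y - Hf x y with hd
  have hd0 : d ≠ 0 := sub_ne_zero.2 hne
  have key : ∀ a : K, Algebra.trace F K (δ⁻¹ * (a * d)) = 0 := by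
    intro a
    have h1 := h'trace (a • x) y
    have h2 := Htrace (a • x) y
    rw [h'smull] at h1
    rw [Hsmull] at h2
    have : Algebra.trace F K (δ⁻¹ * (a * h' x y)) -
        Algebra.trace F K (δ⁻¹ * (a * Hf x y)) = 0 := by
      rw [← h1, ← h2]; ring
    rw [← map_sub] at this
    rw [show δ⁻¹ * (a * d) = δ⁻¹ * (a * h' x y) - δ⁻¹ * (a * Hf x y) by
      rw [hd]; ring]
    exact this
  have := key (δ * d⁻¹)
  rw [show δ⁻¹ * (δ * d⁻¹ * d) = 1 by field_simp, htr1] at this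
  exact h2 this
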